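/- arXiv:2002.08907 — 2 statements merged into one kernel-verified Lean document; each statement's English description precedes it below -/
import Mathlib

section
/- Let X ⊆ ℝⁿ be a nonempty compact convex set and f : ℝⁿ → ℝ twice continuously differentiable with μ·I ⪯ ∇²f(x) ⪯ L·I for all x ∈ X (0 < μ ≤ L), with unique minimizer x* over X. Let x ∈ X and let H ∈ ℝ^{n×n} be symmetric positive definite with η := max{λ_max(H⁻¹∇²f(x)), λ_max((∇²f(x))⁻¹H)} satisfying η − 1 ≤ ω·‖x − x*‖² for a constant ω ≥ 0. Then, in the spectral norm, ‖H⁻¹ − (∇²f(x))⁻¹‖ ≤ (ηω/μ)·‖x − x*‖² and ‖H − ∇²f(x)‖ ≤ ηωL·‖x − x*‖². -/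
open Matrix
open scoped RealInnerProductSpace

/-- The largest (real) eigenvalue of a matrix, as the supremum of its real spectrum. -/
noncomputable def lamMax {n : ℕ} (M : Matrix (Fin n) (Fin n) ℝ) : ℝ :=
  sSup (spectrum ℝ M)

/-- The smallest (real) eigenvalue of a matrix, as the infimum of its real spectrum. -/
noncomputable def lamMin {n : ℕ} (M : Matrix (Fin n) (Fin n) ℝ) : ℝ :=
  sInf (spectrum ℝ M)

/-- Action of a matrix on a vector of Euclidean space. -/
noncomputable def mApply {n : ℕ} (H : Matrix (Fin n) (Fin n) ℝ)
    (v : EuclideanSpace ℝ (Fin n)) : EuclideanSpace ℝ (Fin n) :=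
  Matrix.toEuclideanCLM (𝕜 := ℝ) H v

/-- The squared matrix "norm" ‖v‖²_H := vᵀ H v. -/
noncomputable def qForm {n : ℕ} (H : Matrix (Fin n) (Fin n) ℝ)
    (v : EuclideanSpace ℝ (Fin n)) : ℝ :=
  ⟪v, mApply H v⟫

/-- Spectral (ℓ² operator) norm of a matrix. -/
noncomputable def mNorm {n : ℕ} (H : Matrix (Fin n) (Fin n) ℝ) : ℝ :=
  ‖Matrix.toEuclideanCLM (𝕜 := ℝ) H‖

variable {n : ℕ}

private lemma psd_smul' {M : Matrix (Fin n) (Fin n) ℝ} (hM : M.PosSemidef) {c : ℝ} (hc : 0 ≤ c) :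
    (c • M).PosSemidef := by
  refine Matrix.PosSemidef.of_dotProduct_mulVec_nonneg ?_ (fun x => ?_)
  · unfold Matrix.IsHermitian
    rw [conjTranspose_smul, hM.1.eq]
    simp
  · rw [smul_mulVec, dotProduct_smul, smul_eq_mul]
    exact mul_nonneg hc (hM.dotProduct_mulVec_nonneg x)

private lemma psd_one_smul' {c : ℝ} (hc : 0 ≤ c) :
    ((c • 1 : Matrix (Fin n) (Fin n) ℝ)).PosSemidef :=
  psd_smul' Matrix.PosSemidef.one hc

private lemma pd_one_smul' {c : ℝ} (hc : 0 < c) :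
    ((c • 1 : Matrix (Fin n) (Fin n) ℝ)).PosDef := by
  refine Matrix.PosDef.of_dotProduct_mulVec_pos ?_ (fun x hx => ?_)
  · unfold Matrix.IsHermitian
    rw [conjTranspose_smul, Matrix.PosDef.one.1.eq]
    simp
  · rw [smul_mulVec, dotProduct_smul, smul_eq_mul]
    exact mul_pos hc (Matrix.PosDef.one.dotProduct_mulVec_pos hx)

private lemma spec_le_of_psd' {M : Matrix (Fin n) (Fin n) ℝ} {c t : ℝ}
    (h : (c • 1 - M).PosSemidef) (ht : t ∈ spectrum ℝ M) : t ≤ c := by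
  by_contra hlt
  push_neg at hlt
  rw [spectrum.mem_iff] at ht
  apply ht
  have heq : algebraMap ℝ (Matrix (Fin n) (Fin n) ℝ) t - M
      = ((t - c) • 1 : Matrix (Fin n) (Fin n) ℝ) + (c • 1 - M) := by
    rw [Algebra.algebraMap_eq_smul_one]; module
  rw [heq]
  exact ((pd_one_smul' (by linarith)).add_posSemidef h).isUnit

private lemma spec_ge_of_psd' {M : Matrix (Fin n) (Fin n) ℝ} {c t : ℝ}
    (h : (c • 1 + M).PosSemidef) (ht : t ∈ spectrum ℝ M) : -c ≤ t := by
  by_contra hlt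
  push_neg at hlt
  rw [spectrum.mem_iff] at ht
  apply ht
  have heq : algebraMap ℝ (Matrix (Fin n) (Fin n) ℝ) t - M
      = -((((-t) - c) • 1 : Matrix (Fin n) (Fin n) ℝ) + (c • 1 + M)) := by
    rw [Algebra.algebraMap_eq_smul_one]; module
  rw [heq]
  exact IsUnit.neg <| ((pd_one_smul' (by linarith)).add_posSemidef h).isUnit

private lemma spectrum_conj' {S B : Matrix (Fin n) (Fin n) ℝ} (hS : IsUnit S) :
    spectrum ℝ (S * B * S⁻¹) = spectrum ℝ B := by
  obtain ⟨u, rfl⟩ := hS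
  rw [← Matrix.coe_units_inv]
  exact spectrum.units_conjugate

private lemma spectrum_mul_comm' {A B : Matrix (Fin n) (Fin n) ℝ} (hA : IsUnit A) :
    spectrum ℝ (A * B) = spectrum ℝ (B * A) := by
  have hdet : IsUnit A.det := (Matrix.isUnit_iff_isUnit_det A).mp hA
  have h1 : A⁻¹ * (A * B) * (A⁻¹)⁻¹ = B * A := by
    rw [Matrix.nonsing_inv_nonsing_inv _ hdet, ← mul_assoc,
      Matrix.nonsing_inv_mul _ hdet, one_mul]
  rw [← h1, spectrum_conj' (Matrix.isUnit_nonsing_inv_iff.mpr hA)]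

private lemma spectral_decomp' {M : Matrix (Fin n) (Fin n) ℝ} (hM : M.IsHermitian) (g : Fin n → ℝ)
    (hg : ∀ i, g i = hM.eigenvalues i) :
    M = (hM.eigenvectorUnitary : Matrix (Fin n) (Fin n) ℝ) * diagonal g
      * star (hM.eigenvectorUnitary : Matrix (Fin n) (Fin n) ℝ) := by
  have hgg : RCLike.ofReal ∘ hM.eigenvalues = g := by funext i; simp [hg i]
  rw [← hgg]
  exact hM.spectral_theorem

private lemma herm_psd_of_eig' {M : Matrix (Fin n) (Fin n) ℝ} (hM : M.IsHermitian) {c : ℝ}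
    (h : ∀ i, hM.eigenvalues i ≤ c) : (c • 1 - M).PosSemidef := by
  set U : Matrix (Fin n) (Fin n) ℝ := (hM.eigenvectorUnitary : Matrix (Fin n) (Fin n) ℝ) with hU
  have hUU : U * star U = 1 := (Matrix.mem_unitaryGroup_iff).mp hM.eigenvectorUnitary.2
  have hdec := spectral_decomp' hM hM.eigenvalues (fun _ => rfl)
  have key : c • (1 : Matrix (Fin n) (Fin n) ℝ) - M
      = U * diagonal (fun i => c - hM.eigenvalues i) * star U := by
    have h2 : diagonal (fun i => c - hM.eigenvalues i)
        = c • (1 : Matrix (Fin n) (Fin n) ℝ) - diagonal hM.eigenvalues := by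
      rw [smul_one_eq_diagonal, diagonal_sub]
    rw [h2, Matrix.mul_sub, Matrix.sub_mul, ← hdec]
    congr 1
    rw [mul_smul_comm, Matrix.mul_one, smul_mul_assoc, hUU]
  rw [key, Matrix.star_eq_conjTranspose]
  exact Matrix.PosSemidef.mul_mul_conjTranspose_same
    (Matrix.posSemidef_diagonal_iff.mpr (fun i => sub_nonneg.mpr (h i))) U

section
open scoped MatrixOrder
private noncomputable def psqrt' (P : Matrix (Fin n) (Fin n) ℝ) : Matrix (Fin n) (Fin n) ℝ :=
  CFC.sqrt P
private lemma psqrt_mul_self' {P : Matrix (Fin n) (Fin n) ℝ} (hP : P.PosSemidef) :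
    psqrt' P * psqrt' P = P :=
  CFC.sqrt_mul_sqrt_self P (Matrix.nonneg_iff_posSemidef.mpr hP)
private lemma psqrt_herm' (P : Matrix (Fin n) (Fin n) ℝ) : (psqrt' P).IsHermitian :=
  (Matrix.nonneg_iff_posSemidef.mp (CFC.sqrt_nonneg P)).1
end

private lemma sqrt_isUnit' {P : Matrix (Fin n) (Fin n) ℝ} (hP : P.PosDef) :
    IsUnit (psqrt' P) := by
  rw [Matrix.isUnit_iff_isUnit_det, isUnit_iff_ne_zero]
  intro h0
  have := psqrt_mul_self' hP.posSemidef
  have hd : P.det = 0 := by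
    rw [← this, Matrix.det_mul, h0, mul_zero]
  exact (hP.det_pos.ne') hd

/-- Core lemma: spectrum bound implies Loewner inequality. -/
private lemma le_of_spec' {P Q : Matrix (Fin n) (Fin n) ℝ} (hP : P.PosDef) (hQ : Q.PosDef)
    {c : ℝ} (h : ∀ t ∈ spectrum ℝ (P⁻¹ * Q), t ≤ c) : (c • P - Q).PosSemidef := by
  set S : Matrix (Fin n) (Fin n) ℝ := psqrt' P with hSdef
  have hSS : S * S = P := psqrt_mul_self' hP.posSemidef
  have hSh : S.IsHermitian := psqrt_herm' P
  have hSu : IsUnit S := sqrt_isUnit' hP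
  have hSdet : IsUnit S.det := (Matrix.isUnit_iff_isUnit_det S).mp hSu
  have hSiu : IsUnit (S⁻¹) := Matrix.isUnit_nonsing_inv_iff.mpr hSu
  have hSinv : S⁻¹ * S = 1 := Matrix.nonsing_inv_mul _ hSdet
  have hSinv' : S * S⁻¹ = 1 := Matrix.mul_nonsing_inv _ hSdet
  set M : Matrix (Fin n) (Fin n) ℝ := S⁻¹ * Q * S⁻¹ with hMdef
  have hMh : M.IsHermitian := by
    have := Matrix.isHermitian_conjTranspose_mul_mul (S⁻¹) hQ.1
    rwa [hSh.inv.eq] at this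
  have hPinv : P⁻¹ = S⁻¹ * S⁻¹ := by rw [← hSS, Matrix.mul_inv_rev]
  have hspec : spectrum ℝ (P⁻¹ * Q) = spectrum ℝ M := by
    have h1 : S⁻¹ * M * (S⁻¹)⁻¹ = P⁻¹ * Q := by
      rw [Matrix.nonsing_inv_nonsing_inv _ hSdet, hPinv, hMdef]
      rw [mul_assoc, mul_assoc, hSinv, mul_one, ← mul_assoc]
    rw [← h1, spectrum_conj' hSiu]
  have heig : ∀ i, hMh.eigenvalues i ≤ c := fun i =>
    h _ (hspec ▸ hMh.eigenvalues_mem_spectrum_real i)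
  have hpsd : (c • 1 - M).PosSemidef := herm_psd_of_eig' hMh heig
  have hSMS : S * M * S = Q := by
    rw [hMdef]
    simp only [← mul_assoc]
    rw [hSinv', one_mul, mul_assoc, hSinv, mul_one]
  have key : c • P - Q = S * (c • (1 : Matrix (Fin n) (Fin n) ℝ) - M) * S := by
    rw [Matrix.mul_sub, Matrix.sub_mul]
    congr 1
    · rw [mul_smul_comm, Matrix.mul_one, smul_mul_assoc, hSS]
    · exact hSMS.symm
  rw [key]
  have := Matrix.PosSemidef.mul_mul_conjTranspose_same hpsd S
  rwa [hSh.eq] at this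

/-- Core lemma: Loewner inequality implies spectrum bound. -/
private lemma spec_of_le' {P Q : Matrix (Fin n) (Fin n) ℝ} (hP : P.PosDef) (hQ : Q.PosDef)
    {c : ℝ} (h : (c • P - Q).PosSemidef) : ∀ t ∈ spectrum ℝ (P⁻¹ * Q), t ≤ c := by
  set S : Matrix (Fin n) (Fin n) ℝ := psqrt' P with hSdef
  have hSS : S * S = P := psqrt_mul_self' hP.posSemidef
  have hSh : S.IsHermitian := psqrt_herm' P
  have hSu : IsUnit S := sqrt_isUnit' hP
  have hSdet : IsUnit S.det := (Matrix.isUnit_iff_isUnit_det S).mp hSu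
  have hSiu : IsUnit (S⁻¹) := Matrix.isUnit_nonsing_inv_iff.mpr hSu
  have hSinv : S⁻¹ * S = 1 := Matrix.nonsing_inv_mul _ hSdet
  have hSinv' : S * S⁻¹ = 1 := Matrix.mul_nonsing_inv _ hSdet
  set M : Matrix (Fin n) (Fin n) ℝ := S⁻¹ * Q * S⁻¹ with hMdef
  have hPinv : P⁻¹ = S⁻¹ * S⁻¹ := by rw [← hSS, Matrix.mul_inv_rev]
  have hspec : spectrum ℝ (P⁻¹ * Q) = spectrum ℝ M := by
    have h1 : S⁻¹ * M * (S⁻¹)⁻¹ = P⁻¹ * Q := by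
      rw [Matrix.nonsing_inv_nonsing_inv _ hSdet, hPinv, hMdef]
      rw [mul_assoc, mul_assoc, hSinv, mul_one, ← mul_assoc]
    rw [← h1, spectrum_conj' hSiu]
  have hSPS : S⁻¹ * P * S⁻¹ = 1 := by
    rw [← hSS]
    simp only [← mul_assoc]
    rw [hSinv, one_mul, hSinv']
  have key : c • (1 : Matrix (Fin n) (Fin n) ℝ) - M = S⁻¹ * (c • P - Q) * S⁻¹ := by
    rw [Matrix.mul_sub, Matrix.sub_mul]
    congr 1
    · rw [mul_smul_comm, smul_mul_assoc, hSPS]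
  have hpsd : (c • (1 : Matrix (Fin n) (Fin n) ℝ) - M).PosSemidef := by
    rw [key]
    have := Matrix.PosSemidef.conjTranspose_mul_mul_same h (S⁻¹)
    rwa [hSh.inv.eq] at this
  intro t ht
  exact spec_le_of_psd' hpsd (hspec ▸ ht)

private lemma norm_preserve' {W : Matrix (Fin n) (Fin n) ℝ} (hW : star W * W = 1)
    (w : EuclideanSpace ℝ (Fin n)) : ‖Matrix.toEuclideanCLM (𝕜 := ℝ) W w‖ = ‖w‖ := by
  have h1 : (Matrix.toEuclideanCLM (𝕜 := ℝ) (star W)) ((Matrix.toEuclideanCLM (𝕜 := ℝ) W) w)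
      = w := by
    rw [← ContinuousLinearMap.mul_apply, ← _root_.map_mul, hW, _root_.map_one,
      ContinuousLinearMap.one_apply]
  have h2 : ⟪(Matrix.toEuclideanCLM (𝕜 := ℝ) W) w, (Matrix.toEuclideanCLM (𝕜 := ℝ) W) w⟫
      = ⟪w, w⟫ := by
    have h3 := ContinuousLinearMap.adjoint_inner_left (Matrix.toEuclideanCLM (𝕜 := ℝ) W) w
      ((Matrix.toEuclideanCLM (𝕜 := ℝ) W) w)
    rw [← ContinuousLinearMap.star_eq_adjoint, ← map_star, h1] at h3
    exact h3.symm
  rw [real_inner_self_eq_norm_sq, real_inner_self_eq_norm_sq] at h2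
  calc ‖(Matrix.toEuclideanCLM (𝕜 := ℝ) W) w‖
      = Real.sqrt (‖(Matrix.toEuclideanCLM (𝕜 := ℝ) W) w‖ ^ 2) :=
        (Real.sqrt_sq (norm_nonneg _)).symm
    _ = Real.sqrt (‖w‖ ^ 2) := by rw [h2]
    _ = ‖w‖ := Real.sqrt_sq (norm_nonneg _)

private lemma diag_norm_le' {d : Fin n → ℝ} {c : ℝ} (hc : 0 ≤ c) (h : ∀ i, |d i| ≤ c)
    (w : EuclideanSpace ℝ (Fin n)) :
    ‖Matrix.toEuclideanCLM (𝕜 := ℝ) (diagonal d) w‖ ≤ c * ‖w‖ := by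
  rw [EuclideanSpace.norm_eq, EuclideanSpace.norm_eq]
  have hterm : ∀ i, ‖(Matrix.toEuclideanCLM (𝕜 := ℝ) (diagonal d) w) i‖ ^ 2
      ≤ c ^ 2 * ‖w i‖ ^ 2 := by
    intro i
    have happ : (Matrix.toEuclideanCLM (𝕜 := ℝ) (diagonal d) w) i = d i * w i := by
      show (diagonal d *ᵥ (fun j => w j)) i = _
      rw [mulVec_diagonal]
    rw [happ, Real.norm_eq_abs, Real.norm_eq_abs, abs_mul, mul_pow]
    exact mul_le_mul_of_nonneg_right (pow_le_pow_left₀ (abs_nonneg _) (h i) 2) (sq_nonneg _)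
  calc Real.sqrt (∑ i, ‖(Matrix.toEuclideanCLM (𝕜 := ℝ) (diagonal d) w) i‖ ^ 2)
      ≤ Real.sqrt (∑ i, c ^ 2 * ‖w i‖ ^ 2) :=
        Real.sqrt_le_sqrt (Finset.sum_le_sum fun i _ => hterm i)
    _ = Real.sqrt (c ^ 2 * ∑ i, ‖w i‖ ^ 2) := by rw [Finset.mul_sum]
    _ = c * Real.sqrt (∑ i, ‖w i‖ ^ 2) := by
        rw [Real.sqrt_mul (sq_nonneg c), Real.sqrt_sq hc]

private lemma clm_norm_le' {M : Matrix (Fin n) (Fin n) ℝ} (hM : M.IsHermitian) {c : ℝ}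
    (hc : 0 ≤ c) (h : ∀ i, |hM.eigenvalues i| ≤ c) :
    ‖Matrix.toEuclideanCLM (𝕜 := ℝ) M‖ ≤ c := by
  apply ContinuousLinearMap.opNorm_le_bound _ hc
  intro v
  set U : Matrix (Fin n) (Fin n) ℝ := (hM.eigenvectorUnitary : Matrix (Fin n) (Fin n) ℝ) with hU
  have hU1 : star U * U = 1 := (Matrix.mem_unitaryGroup_iff').mp hM.eigenvectorUnitary.2
  have hU2 : U * star U = 1 := (Matrix.mem_unitaryGroup_iff).mp hM.eigenvectorUnitary.2
  have hdec := spectral_decomp' hM hM.eigenvalues (fun _ => rfl)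
  rw [hdec, _root_.map_mul, _root_.map_mul, ContinuousLinearMap.mul_apply,
    ContinuousLinearMap.mul_apply, norm_preserve' hU1]
  calc ‖Matrix.toEuclideanCLM (𝕜 := ℝ) (diagonal hM.eigenvalues)
        ((Matrix.toEuclideanCLM (𝕜 := ℝ) (star U)) v)‖
      ≤ c * ‖(Matrix.toEuclideanCLM (𝕜 := ℝ) (star U)) v‖ := diag_norm_le' hc h _
    _ = c * ‖v‖ := by rw [norm_preserve' (by rw [star_star]; exact hU2) v]

private theorem aux_main {n : ℕ}
    (μ L : ℝ) (hμ : 0 < μ) (hμL : μ ≤ L)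
    (A : Matrix (Fin n) (Fin n) ℝ)
    (hbound : (A - μ • (1 : Matrix (Fin n) (Fin n) ℝ)).PosSemidef ∧
      (L • (1 : Matrix (Fin n) (Fin n) ℝ) - A).PosSemidef)
    (r : ℝ) (hr : 0 ≤ r)
    (H : Matrix (Fin n) (Fin n) ℝ) (hH : H.PosDef)
    (η : ℝ) (hη : η = max (lamMax (H⁻¹ * A)) (lamMax (A⁻¹ * H)))
    (ω : ℝ) (hω : 0 ≤ ω) (hacc : η - 1 ≤ ω * r) (hn : 0 < n) :
    mNorm (H⁻¹ - A⁻¹) ≤ η * ω / μ * r ∧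
    mNorm (H - A) ≤ η * ω * L * r := by
  obtain ⟨hAμ, hAL⟩ := hbound
  have hL : 0 < L := lt_of_lt_of_le hμ hμL
  have hμinv : (0:ℝ) ≤ μ⁻¹ := (inv_nonneg).mpr hμ.le
  have hA_pd : A.PosDef := by
    have h1 : ((μ • 1 : Matrix (Fin n) (Fin n) ℝ)).PosDef := pd_one_smul' hμ
    have h2 := h1.add_posSemidef hAμ
    have he : μ • (1 : Matrix (Fin n) (Fin n) ℝ) + (A - μ • 1) = A := by module
    rwa [he] at h2
  have hAdet : IsUnit A.det := (Matrix.isUnit_iff_isUnit_det A).mp hA_pd.isUnit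
  have hHdet : IsUnit H.det := (Matrix.isUnit_iff_isUnit_det H).mp hH.isUnit
  -- spectrum bounds from the definition of η
  have hs1 : ∀ t ∈ spectrum ℝ (H⁻¹ * A), t ≤ η := by
    intro t ht
    have h1 : t ≤ lamMax (H⁻¹ * A) := le_csSup (Matrix.finite_spectrum _).bddAbove ht
    rw [hη]
    exact h1.trans (le_max_left _ _)
  have hs2 : ∀ t ∈ spectrum ℝ (A⁻¹ * H), t ≤ η := by
    intro t ht
    have h1 : t ≤ lamMax (A⁻¹ * H) := le_csSup (Matrix.finite_spectrum _).bddAbove ht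
    rw [hη]
    exact h1.trans (le_max_right _ _)
  have S1 : (η • H - A).PosSemidef := le_of_spec' hH hA_pd hs1
  have S2 : (η • A - H).PosSemidef := le_of_spec' hA_pd hH hs2
  have hAinvinv : (A⁻¹)⁻¹ = A := Matrix.nonsing_inv_nonsing_inv _ hAdet
  have hHinvinv : (H⁻¹)⁻¹ = H := Matrix.nonsing_inv_nonsing_inv _ hHdet
  have hs3 : ∀ t ∈ spectrum ℝ ((A⁻¹)⁻¹ * H⁻¹), t ≤ η := by
    rw [hAinvinv, spectrum_mul_comm' hA_pd.isUnit]
    exact hs1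
  have S3 : (η • A⁻¹ - H⁻¹).PosSemidef := le_of_spec' hA_pd.inv hH.inv hs3
  have hs4 : ∀ t ∈ spectrum ℝ ((H⁻¹)⁻¹ * A⁻¹), t ≤ η := by
    rw [hHinvinv, spectrum_mul_comm' hH.isUnit]
    exact hs2
  have S4 : (η • H⁻¹ - A⁻¹).PosSemidef := le_of_spec' hH.inv hA_pd.inv hs4
  -- S5 : A⁻¹ ⪯ μ⁻¹ • 1
  have h5a : ((μ⁻¹ • A - 1 : Matrix (Fin n) (Fin n) ℝ)).PosSemidef := by
    have h := psd_smul' hAμ hμinv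
    rwa [smul_sub, smul_smul, inv_mul_cancel₀ hμ.ne', one_smul] at h
  have h5b : ∀ t ∈ spectrum ℝ (A⁻¹ * 1), t ≤ μ⁻¹ := spec_of_le' hA_pd Matrix.PosDef.one h5a
  have h5c : ∀ t ∈ spectrum ℝ ((1 : Matrix (Fin n) (Fin n) ℝ)⁻¹ * A⁻¹), t ≤ μ⁻¹ := by
    intro t ht
    have hone : (1 : Matrix (Fin n) (Fin n) ℝ)⁻¹ = 1 := Matrix.inv_eq_right_inv (by rw [one_mul])
    rw [hone, one_mul] at ht
    apply h5b
    rwa [mul_one]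
  have S5 : ((μ⁻¹ • 1 - A⁻¹ : Matrix (Fin n) (Fin n) ℝ)).PosSemidef :=
    le_of_spec' Matrix.PosDef.one hA_pd.inv h5c
  -- η ≥ 1
  set v : Fin n → ℝ := Pi.single (⟨0, hn⟩ : Fin n) (1:ℝ) with hvdef
  have expand : ∀ (c : ℝ) (B C : Matrix (Fin n) (Fin n) ℝ),
      dotProduct (star v) ((c • B - C) *ᵥ v)
      = c * dotProduct (star v) (B *ᵥ v) - dotProduct (star v) (C *ᵥ v) := by
    intro c B C
    rw [sub_mulVec, dotProduct_sub, smul_mulVec, dotProduct_smul, smul_eq_mul]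
  have hv0 : v ≠ 0 := by
    intro hzero
    have h := congrFun hzero ⟨0, hn⟩
    rw [hvdef] at h
    simp [Pi.single_eq_same] at h
  have qA := hA_pd.dotProduct_mulVec_pos hv0
  have qH := hH.dotProduct_mulVec_pos hv0
  have hη_pos : 0 < η := by
    have h := S1.dotProduct_mulVec_nonneg v
    rw [expand] at h
    nlinarith [qA, qH]
  have hη1 : 1 ≤ η := by
    have hs2' := psd_smul' S2 hη_pos.le
    have hsum := hs2'.add S1
    have heq : η • (η • A - H) + (η • H - A) = (η * η) • A - A := by module
    rw [heq] at hsum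
    have h := hsum.dotProduct_mulVec_nonneg v
    have expA := expand (η * η) A A
    rw [expA] at h
    nlinarith [qA, hη_pos, h, mul_pos hη_pos qA, mul_pos (mul_pos hη_pos hη_pos) qA]
  constructor
  · set c1 : ℝ := η * ω / μ * r with hc1
    have f1 : (η - 1) * μ⁻¹ ≤ c1 := by
      rw [hc1, div_eq_mul_inv]
      nlinarith [mul_nonneg (sub_nonneg.mpr hacc) hμinv, mul_nonneg (mul_nonneg hω hr) hμinv, hη1]
    have f2 : (η * η - η) * μ⁻¹ ≤ c1 := by
      rw [hc1, div_eq_mul_inv]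
      nlinarith [mul_nonneg (sub_nonneg.mpr hacc) hμinv, hη_pos]
    have hc1nn : 0 ≤ c1 := by
      rw [hc1]
      exact mul_nonneg (div_nonneg (mul_nonneg hη_pos.le hω) hμ.le) hr
    have upper : (c1 • 1 - (H⁻¹ - A⁻¹)).PosSemidef := by
      have e1 : c1 • (1 : Matrix (Fin n) (Fin n) ℝ) - (H⁻¹ - A⁻¹)
          = (c1 - (η - 1) * μ⁻¹) • 1 + (η - 1) • (μ⁻¹ • 1 - A⁻¹) + (η • A⁻¹ - H⁻¹) := by
        module
      rw [e1]
      exact ((psd_one_smul' (by linarith)).add (psd_smul' S5 (by linarith))).add S3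
    have lower : (c1 • 1 + (H⁻¹ - A⁻¹)).PosSemidef := by
      have e2 : c1 • (1 : Matrix (Fin n) (Fin n) ℝ) + (H⁻¹ - A⁻¹)
          = (c1 - (η * η - η) * μ⁻¹) • 1 + (η * η - η) • (μ⁻¹ • 1 - A⁻¹)
            + (η - 1) • (η • A⁻¹ - H⁻¹) + (η • H⁻¹ - A⁻¹) := by
        module
      rw [e2]
      exact (((psd_one_smul' (by linarith)).add
        (psd_smul' S5 (by nlinarith))).add (psd_smul' S3 (by linarith))).add S4
    have hXh : (H⁻¹ - A⁻¹).IsHermitian := hH.isHermitian.inv.sub hA_pd.isHermitian.inv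
    have heig : ∀ i, |hXh.eigenvalues i| ≤ c1 := by
      intro i
      have hmem := hXh.eigenvalues_mem_spectrum_real i
      exact abs_le.mpr ⟨spec_ge_of_psd' lower hmem, spec_le_of_psd' upper hmem⟩
    exact clm_norm_le' hXh hc1nn heig
  · set c2 : ℝ := η * ω * L * r with hc2
    have f1 : (η - 1) * L ≤ c2 := by
      rw [hc2]
      nlinarith [mul_nonneg (sub_nonneg.mpr hacc) hL.le, mul_nonneg (mul_nonneg hω hr) hL.le, hη1]
    have f2 : (η * η - η) * L ≤ c2 := by
      rw [hc2]
      nlinarith [mul_nonneg (sub_nonneg.mpr hacc) hL.le, hη_pos]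
    have hc2nn : 0 ≤ c2 := by
      rw [hc2]
      exact mul_nonneg (mul_nonneg (mul_nonneg hη_pos.le hω) hL.le) hr
    have upper : (c2 • 1 - (H - A)).PosSemidef := by
      have e1 : c2 • (1 : Matrix (Fin n) (Fin n) ℝ) - (H - A)
          = (c2 - (η - 1) * L) • 1 + (η - 1) • (L • 1 - A) + (η • A - H) := by
        module
      rw [e1]
      exact ((psd_one_smul' (by linarith)).add (psd_smul' hAL (by linarith))).add S2
    have lower : (c2 • 1 + (H - A)).PosSemidef := by
      have e2 : c2 • (1 : Matrix (Fin n) (Fin n) ℝ) + (H - A)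
          = (c2 - (η * η - η) * L) • 1 + (η * η - η) • (L • 1 - A)
            + (η - 1) • (η • A - H) + (η • H - A) := by
        module
      rw [e2]
      exact (((psd_one_smul' (by linarith)).add
        (psd_smul' hAL (by nlinarith))).add (psd_smul' S2 (by linarith))).add S1
    have hXh : (H - A).IsHermitian := hH.isHermitian.sub hA_pd.isHermitian
    have heig : ∀ i, |hXh.eigenvalues i| ≤ c2 := by
      intro i
      have hmem := hXh.eigenvalues_mem_spectrum_real i
      exact abs_le.mpr ⟨spec_ge_of_psd' lower hmem, spec_le_of_psd' upper hmem⟩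
    exact clm_norm_le' hXh hc2nn heig


/-- accuracy of the Hessian approximation: if `H` is symmetric positive
definite with `η := max{λ_max(H⁻¹∇²f(x)), λ_max((∇²f(x))⁻¹H)}` satisfying
`η − 1 ≤ ω‖x − x*‖²`, then in spectral norm
`‖H⁻¹ − (∇²f(x))⁻¹‖ ≤ (ηω/μ)‖x − x*‖²` and `‖H − ∇²f(x)‖ ≤ ηωL‖x − x*‖²`. -/
theorem socgs_hessian_approximation_accuracy {n : ℕ}
    (X : Set (EuclideanSpace ℝ (Fin n)))
    (hne : X.Nonempty) (hcomp : IsCompact X) (hconv : Convex ℝ X)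
    (f : EuclideanSpace ℝ (Fin n) → ℝ) (hf : ContDiff ℝ 2 f)
    (Hess : EuclideanSpace ℝ (Fin n) → Matrix (Fin n) (Fin n) ℝ)
    (hHess : ∀ x, HasFDerivAt (gradient f) (Matrix.toEuclideanCLM (𝕜 := ℝ) (Hess x)) x)
    (μ L : ℝ) (hμ : 0 < μ) (hμL : μ ≤ L)
    (hbound : ∀ x ∈ X, (Hess x - μ • (1 : Matrix (Fin n) (Fin n) ℝ)).PosSemidef ∧
      (L • (1 : Matrix (Fin n) (Fin n) ℝ) - Hess x).PosSemidef)
    (xstar : EuclideanSpace ℝ (Fin n)) (hxstar : xstar ∈ X)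
    (hminstar : ∀ y ∈ X, f xstar ≤ f y)
    (huniq : ∀ z ∈ X, (∀ y ∈ X, f z ≤ f y) → z = xstar)
    (x : EuclideanSpace ℝ (Fin n)) (hx : x ∈ X)
    (H : Matrix (Fin n) (Fin n) ℝ) (hH : H.PosDef)
    (η : ℝ) (hη : η = max (lamMax (H⁻¹ * Hess x)) (lamMax ((Hess x)⁻¹ * H)))
    (ω : ℝ) (hω : 0 ≤ ω) (hacc : η - 1 ≤ ω * ‖x - xstar‖ ^ 2) :
    mNorm (H⁻¹ - (Hess x)⁻¹) ≤ η * ω / μ * ‖x - xstar‖ ^ 2 ∧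
    mNorm (H - Hess x) ≤ η * ω * L * ‖x - xstar‖ ^ 2 := by
  rcases Nat.eq_zero_or_pos n with hn | hn
  · subst hn
    haveI hsing : Subsingleton (EuclideanSpace ℝ (Fin 0)) := ⟨fun a b => by ext i; exact i.elim0⟩
    haveI hsingM : Subsingleton (Matrix (Fin 0) (Fin 0) ℝ) := ⟨fun a b => funext fun i => i.elim0⟩
    have hzero : ∀ M : Matrix (Fin 0) (Fin 0) ℝ, mNorm M = 0 := by
      intro M
      have h0 : Matrix.toEuclideanCLM (𝕜 := ℝ) M = 0 :=
        ContinuousLinearMap.ext fun v => Subsingleton.elim _ _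
      simp only [mNorm, h0, norm_zero]
    have hspec : ∀ M : Matrix (Fin 0) (Fin 0) ℝ, spectrum ℝ M = ∅ := by
      intro M
      ext t
      simp [spectrum.mem_iff, isUnit_of_subsingleton]
    have hη0 : η = 0 := by
      rw [hη, lamMax, lamMax, hspec, hspec, Real.sSup_empty, max_self]
    rw [hzero, hzero, hη0]
    constructor <;> simp
  · exact aux_main μ L hμ hμL (Hess x) (hbound x hx) (‖x - xstar‖ ^ 2) (sq_nonneg _)
      H hH η hη ω hω hacc hn
end

section
/- Let X ⊆ ℝⁿ be a nonempty compact convex set and f : ℝⁿ → ℝ twice continuously differentiable with μ·I ⪯ ∇²f(x) ⪯ L·I for all x ∈ X (0 < μ ≤ L). Fix x_k ∈ X, a symmetric positive definite H_k, and set η_k := max{λ_max(H_k⁻¹∇²f(x_k)), λ_max((∇²f(x_k))⁻¹H_k)}. Let f̂_k(x) := f(x_k) + ⟨∇f(x_k), x − x_k⟩ + ½‖x − x_k‖²_{H_k} with minimizer x̃*_{k+1} over X. Then every y ∈ X with f̂_k(y) ≤ f̂_k(x_k) satisfies ‖y − x̃*_{k+1}‖ ≤ √(2η_k/μ) · ‖∇f(x_k)‖^{1/2}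 · ‖x̃*_{k+1} − x_k‖^{1/2}. -/
open Matrix
open scoped RealInnerProductSpace

/- ### Auxiliary lemmas -/

lemma mApply_coords {n : ℕ} (H : Matrix (Fin n) (Fin n) ℝ) (v : EuclideanSpace ℝ (Fin n))
    (i : Fin n) : mApply H v i = (H *ᵥ (WithLp.equiv 2 _ v)) i := by
  have h := Matrix.ofLp_toEuclideanCLM (𝕜 := ℝ) H v
  exact (congrFun h i).trans rfl

lemma qForm_eq_dot {n : ℕ} (H : Matrix (Fin n) (Fin n) ℝ) (v : EuclideanSpace ℝ (Fin n)) :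
    qForm H v = (WithLp.equiv 2 _ v) ⬝ᵥ (H *ᵥ (WithLp.equiv 2 _ v)) := by
  simp only [qForm, PiLp.inner_apply, RCLike.inner_apply, dotProduct, starRingEnd_apply]
  refine Finset.sum_congr rfl fun i _ => ?_
  rw [mApply_coords, mul_comm]; rfl

lemma inner_eq_dot {n : ℕ} (a b : EuclideanSpace ℝ (Fin n)) :
    ⟪a, b⟫ = (WithLp.equiv 2 _ a) ⬝ᵥ (WithLp.equiv 2 _ b) := by
  simp only [PiLp.inner_apply, RCLike.inner_apply, dotProduct, starRingEnd_apply]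
  exact Finset.sum_congr rfl fun i _ => mul_comm _ _

lemma herm_quad_le {n : ℕ} (M : Matrix (Fin n) (Fin n) ℝ)
    (hM : M.IsHermitian) (u : Fin n → ℝ) :
    u ⬝ᵥ (M *ᵥ u) ≤ lamMax M * (u ⬝ᵥ u) := by
  have hspec : spectrum ℝ M = Set.range hM.eigenvalues :=
    hM.spectrum_real_eq_range_eigenvalues
  have hbdd : BddAbove (spectrum ℝ M) := by
    rw [hspec]; exact (Set.finite_range _).bddAbove
  have hle : ∀ i, hM.eigenvalues i ≤ lamMax M := fun i =>
    le_csSup hbdd (hspec ▸ Set.mem_range_self i)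
  set V : Matrix (Fin n) (Fin n) ℝ := (hM.eigenvectorUnitary : Matrix (Fin n) (Fin n) ℝ) with hVdef
  have hVV : star V * V = 1 := (Matrix.mem_unitaryGroup_iff').mp hM.eigenvectorUnitary.2
  have hstar : star V = Vᵀ := by
    ext i j; simp [Matrix.star_apply]
  have hMst : M = V * diagonal (RCLike.ofReal ∘ hM.eigenvalues) * star V :=
    hM.spectral_theorem
  set D : Matrix (Fin n) (Fin n) ℝ := diagonal (RCLike.ofReal ∘ hM.eigenvalues) with hD
  set w : Fin n → ℝ := Vᵀ *ᵥ u with hw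
  have hVtV : Vᵀ * V = 1 := hstar ▸ hVV
  have hVVt : V * Vᵀ = 1 := mul_eq_one_comm.mp hVtV
  have h1 : u ⬝ᵥ (M *ᵥ u) = w ⬝ᵥ (D *ᵥ w) := by
    conv_lhs => rw [hMst, hstar]
    rw [← mulVec_mulVec, ← mulVec_mulVec, dotProduct_mulVec u V, ← mulVec_transpose]
  have h2 : u ⬝ᵥ u = w ⬝ᵥ w := by
    have : w ⬝ᵥ w = u ⬝ᵥ u := by
      rw [hw, dotProduct_mulVec, vecMul_transpose, mulVec_mulVec, hVVt, one_mulVec]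
    exact this.symm
  rw [h1, h2]
  have h3 : w ⬝ᵥ (D *ᵥ w) = ∑ i, hM.eigenvalues i * (w i * w i) := by
    simp only [hD, dotProduct, mulVec_diagonal, Function.comp_apply, RCLike.ofReal_real_eq_id,
      id_eq]
    exact Finset.sum_congr rfl fun i _ => by ring
  rw [h3, dotProduct, Finset.mul_sum]
  exact Finset.sum_le_sum fun i _ => by nlinarith [hle i, mul_self_nonneg (w i)]

open scoped MatrixOrder in
lemma quad_le_lamMax_mul {n : ℕ} (A B : Matrix (Fin n) (Fin n) ℝ)
    (hA : A.IsHermitian) (hB : B.PosDef) (u : Fin n → ℝ) :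
    u ⬝ᵥ (A *ᵥ u) ≤ lamMax (B⁻¹ * A) * (u ⬝ᵥ (B *ᵥ u)) := by
  set S := CFC.sqrt B with hSdef
  have hS : S.PosSemidef := Matrix.nonneg_iff_posSemidef.mp (CFC.sqrt_nonneg B)
  have hSH : S.IsHermitian := hS.1
  have hSt : Sᵀ = S := by rw [← conjTranspose_eq_transpose_of_trivial]; exact hSH.eq
  have hAt : Aᵀ = A := by rw [← conjTranspose_eq_transpose_of_trivial]; exact hA.eq
  have hSS : S * S = B := CFC.sqrt_mul_sqrt_self B hB.posSemidef.nonneg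
  have hSunit : IsUnit S := by
    rw [Matrix.isUnit_iff_isUnit_det]
    have h : S.det * S.det = B.det := by rw [← det_mul, hSS]
    have hBdet : (0:ℝ) < B.det := hB.det_pos
    refine isUnit_iff_ne_zero.mpr fun h0 => ?_
    rw [h0, mul_zero] at h; linarith
  have hSdetu : IsUnit S.det := (Matrix.isUnit_iff_isUnit_det S).mp hSunit
  have hSinv' : S⁻¹ * S = 1 := nonsing_inv_mul S hSdetu
  have hSit : (S⁻¹)ᵀ = S⁻¹ := by rw [transpose_nonsing_inv, hSt]
  set M := S⁻¹ * A * S⁻¹ with hMdef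
  have hMH : M.IsHermitian := by
    have : Mᴴ = M := by
      rw [hMdef, conjTranspose_mul, conjTranspose_mul, conjTranspose_nonsing_inv, hSH.eq,
        hA.eq, Matrix.mul_assoc]
    exact this
  have hBinv : B⁻¹ = S⁻¹ * S⁻¹ := by rw [← hSS, Matrix.mul_inv_rev]
  have hconj : B⁻¹ * A = S⁻¹ * M * S := by
    rw [hBinv, hMdef, Matrix.mul_assoc, Matrix.mul_assoc, Matrix.mul_assoc, hSinv',
      Matrix.mul_one]
  have hspec : lamMax (B⁻¹ * A) = lamMax M := by
    unfold lamMax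
    rw [hconj]
    have : S⁻¹ * M * S = (↑(hSunit.unit⁻¹) : Matrix (Fin n) (Fin n) ℝ) * M *
        (hSunit.unit : Matrix (Fin n) (Fin n) ℝ) := by
      rw [Matrix.coe_units_inv, hSunit.unit_spec]
    rw [this, spectrum.units_conjugate']
  have e1 : M *ᵥ (S *ᵥ u) = S⁻¹ *ᵥ (A *ᵥ u) := by
    rw [hMdef, mulVec_mulVec, Matrix.mul_assoc, hSinv', Matrix.mul_one, ← mulVec_mulVec]
  have e2 : (S *ᵥ u) ᵥ* S⁻¹ = u := by
    rw [← mulVec_transpose, hSit, mulVec_mulVec, hSinv', one_mulVec]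
  have hq1 : u ⬝ᵥ (A *ᵥ u) = (S *ᵥ u) ⬝ᵥ (M *ᵥ (S *ᵥ u)) := by
    rw [e1]
    conv_rhs => rw [dotProduct_mulVec, e2]
  have hq2 : u ⬝ᵥ (B *ᵥ u) = (S *ᵥ u) ⬝ᵥ (S *ᵥ u) := by
    have e3 : (S *ᵥ u) ᵥ* S = B *ᵥ u := by
      rw [← mulVec_transpose, hSt, mulVec_mulVec, hSS]
    conv_rhs => rw [dotProduct_mulVec (S *ᵥ u) S u, e3, dotProduct_comm]
  rw [hq1, hq2, hspec]
  exact herm_quad_le M hMH (S *ᵥ u)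

lemma mApply_add {n : ℕ} (H : Matrix (Fin n) (Fin n) ℝ) (a b : EuclideanSpace ℝ (Fin n)) :
    mApply H (a + b) = mApply H a + mApply H b := map_add _ a b

lemma mApply_smul {n : ℕ} (H : Matrix (Fin n) (Fin n) ℝ) (t : ℝ) (a : EuclideanSpace ℝ (Fin n)) :
    mApply H (t • a) = t • mApply H a := map_smul _ t a

lemma mApply_symm {n : ℕ} (H : Matrix (Fin n) (Fin n) ℝ) (hH : H.IsHermitian)
    (a b : EuclideanSpace ℝ (Fin n)) : ⟪mApply H a, b⟫ = ⟪a, mApply H b⟫ := by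
  have hs := (Matrix.isHermitian_iff_isSymmetric.mp hH)
  have h1 : Matrix.toEuclideanLin H a = mApply H a := by
    rw [mApply, ← Matrix.coe_toEuclideanCLM_eq_toEuclideanLin]; rfl
  have h2 : Matrix.toEuclideanLin H b = mApply H b := by
    rw [mApply, ← Matrix.coe_toEuclideanCLM_eq_toEuclideanLin]; rfl
  have := hs a b
  rwa [h1, h2] at this

lemma qForm_smul {n : ℕ} (H : Matrix (Fin n) (Fin n) ℝ) (t : ℝ) (a : EuclideanSpace ℝ (Fin n)) :
    qForm H (t • a) = t ^ 2 * qForm H a := by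
  rw [qForm, qForm, mApply_smul, real_inner_smul_left, real_inner_smul_right]; ring

lemma qForm_expand {n : ℕ} (H : Matrix (Fin n) (Fin n) ℝ) (hH : H.IsHermitian)
    (a b : EuclideanSpace ℝ (Fin n)) :
    qForm H (a + b) = qForm H a + 2 * ⟪a, mApply H b⟫ + qForm H b := by
  have hx : ⟪b, mApply H a⟫ = ⟪a, mApply H b⟫ := by
    rw [real_inner_comm]; exact mApply_symm H hH a b
  simp only [qForm, mApply_add, inner_add_left, inner_add_right]
  rw [hx]; ring

set_option maxHeartbeats 1000000 in
/-- with `μ·I ⪯ ∇²f ⪯ L·I` on `X` and `x̃*_{k+1}` the minimizer over `X` of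
the quadratic model `f̂_k`, every `y ∈ X` with `f̂_k(y) ≤ f̂_k(x_k)` satisfies
`‖y − x̃*_{k+1}‖ ≤ √(2η_k/μ)·‖∇f(x_k)‖^{1/2}·‖x̃*_{k+1} − x_k‖^{1/2}`. -/
theorem socgs_model_sublevel_distance_bound {n : ℕ}
    (X : Set (EuclideanSpace ℝ (Fin n)))
    (hne : X.Nonempty) (hcomp : IsCompact X) (hconv : Convex ℝ X)
    (f : EuclideanSpace ℝ (Fin n) → ℝ) (hf : ContDiff ℝ 2 f)
    (Hess : EuclideanSpace ℝ (Fin n) → Matrix (Fin n) (Fin n) ℝ)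
    (hHess : ∀ x, HasFDerivAt (gradient f) (Matrix.toEuclideanCLM (𝕜 := ℝ) (Hess x)) x)
    (μ L : ℝ) (hμ : 0 < μ) (hμL : μ ≤ L)
    (hbound : ∀ x ∈ X, (Hess x - μ • (1 : Matrix (Fin n) (Fin n) ℝ)).PosSemidef ∧
      (L • (1 : Matrix (Fin n) (Fin n) ℝ) - Hess x).PosSemidef)
    (xk : EuclideanSpace ℝ (Fin n)) (hxk : xk ∈ X)
    (Hk : Matrix (Fin n) (Fin n) ℝ) (hHk : Hk.PosDef)
    (ηk : ℝ) (hηk : ηk = max (lamMax (Hk⁻¹ * Hess xk)) (lamMax ((Hess xk)⁻¹ * Hk)))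
    (fhat : EuclideanSpace ℝ (Fin n) → ℝ)
    (hfhat : ∀ x, fhat x =
      f xk + ⟪gradient f xk, x - xk⟫ + (1 / 2) * qForm Hk (x - xk))
    (xt : EuclideanSpace ℝ (Fin n)) (hxtX : xt ∈ X)
    (hxtmin : ∀ w ∈ X, fhat xt ≤ fhat w) :
    ∀ y ∈ X, fhat y ≤ fhat xk →
      ‖y - xt‖ ≤ Real.sqrt (2 * ηk / μ) *
        Real.sqrt ‖gradient f xk‖ * Real.sqrt ‖xt - xk‖ := by
  intro y hyX hy
  set g := gradient f xk with hg
  set v := g + mApply Hk (xt - xk) with hv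
  -- quadratic expansion of the model around xt
  have key : ∀ z : EuclideanSpace ℝ (Fin n),
      fhat z = fhat xt + ⟪v, z - xt⟫ + (1 / 2) * qForm Hk (z - xt) := by
    intro z
    have hz : z - xk = (xt - xk) + (z - xt) := by abel
    rw [hfhat z, hfhat xt, hz, qForm_expand Hk hHk.1, hv, inner_add_left]
    have : ⟪g, (xt - xk) + (z - xt)⟫ = ⟪g, xt - xk⟫ + ⟪g, z - xt⟫ := inner_add_right _ _ _
    rw [this]
    have hsy : ⟪mApply Hk (xt - xk), z - xt⟫ = ⟪xt - xk, mApply Hk (z - xt)⟫ :=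
      mApply_symm Hk hHk.1 _ _
    rw [hsy]
    ring
  -- nonnegativity of the quadratic form for PSD matrices
  have qF_nonneg : ∀ w : EuclideanSpace ℝ (Fin n), 0 ≤ qForm Hk w := by
    intro w
    rw [qForm_eq_dot]
    have := hHk.posSemidef.dotProduct_mulVec_nonneg (WithLp.equiv 2 _ w)
    simpa using this
  -- variational inequality at the minimizer
  have VI : ∀ w ∈ X, 0 ≤ ⟪v, w - xt⟫ := by
    intro w hwX
    set c := ⟪v, w - xt⟫ with hc
    set q := qForm Hk (w - xt) with hq
    have hq0 : 0 ≤ q := qF_nonneg _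
    have hstep : ∀ t : ℝ, 0 < t → t ≤ 1 → 0 ≤ t * c + t ^ 2 / 2 * q := by
      intro t ht0 ht1
      have hzX : xt + t • (w - xt) ∈ X := by
        have h := hconv hxtX hwX (a := 1 - t) (b := t) (by linarith) (le_of_lt ht0)
          (by ring)
        have heq : (1 - t) • xt + t • w = xt + t • (w - xt) := by module
        rwa [heq] at h
      have hmin := hxtmin _ hzX
      have hkey := key (xt + t • (w - xt))
      have hsub : xt + t • (w - xt) - xt = t • (w - xt) := by abel
      rw [hsub] at hkey
      rw [qForm_smul, real_inner_smul_right] at hkey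
      rw [hkey] at hmin
      rw [← hc, ← hq] at hmin
      nlinarith [hmin]
    by_contra hcneg
    push_neg at hcneg
    have ht0 : 0 < min 1 (-c / (q + 1)) := by
      apply lt_min one_pos
      apply div_pos (by linarith) (by linarith)
    have ht1 : min 1 (-c / (q + 1)) ≤ 1 := min_le_left _ _
    have htq : min 1 (-c / (q + 1)) ≤ -c / (q + 1) := min_le_right _ _
    have h := hstep _ ht0 ht1
    set t := min 1 (-c / (q + 1)) with htdef
    have htq' : t * (q + 1) ≤ -c := by
      rw [← le_div_iff₀ (by linarith : (0:ℝ) < q + 1)]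
      exact htq
    nlinarith [mul_pos ht0 (neg_pos.mpr hcneg), sq_nonneg t, mul_nonneg (le_of_lt ht0) hq0]
  -- half-quadratic bound from the sublevel condition
  have hineq1 : (1 / 2) * qForm Hk (y - xt) ≤ ‖g‖ * ‖xt - xk‖ := by
    have h1 : fhat xt + (1 / 2) * qForm Hk (y - xt) ≤ fhat y := by
      have := key y
      have hVIy := VI y hyX
      linarith [this]
    have h2 : fhat xk = f xk := by
      rw [hfhat xk]
      simp [qForm, mApply]
    have h3 : fhat xt = f xk + ⟪g, xt - xk⟫ + (1 / 2) * qForm Hk (xt - xk) := hfhat xt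
    have h4 : -⟪g, xt - xk⟫ ≤ ‖g‖ * ‖xt - xk‖ := by
      have := real_inner_le_norm g (-(xt - xk))
      rwa [inner_neg_right, norm_neg] at this
    have h5 : 0 ≤ qForm Hk (xt - xk) := qF_nonneg _
    linarith
  -- PSD lower bound via the Hessian and the lamMax comparison
  by_cases hyt : y = xt
  · rw [hyt, sub_self, norm_zero]
    positivity
  · have hune : y - xt ≠ 0 := sub_ne_zero_of_ne hyt
    set u : EuclideanSpace ℝ (Fin n) := y - xt with hu
    set ue : Fin n → ℝ := WithLp.equiv 2 _ u with hue
    have hHessH : (Hess xk).IsHermitian := by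
      have h1 := (hbound xk hxk).1.1
      have h2 : (μ • (1 : Matrix (Fin n) (Fin n) ℝ)).IsHermitian := by
        show (μ • (1 : Matrix (Fin n) (Fin n) ℝ))ᴴ = _
        simp
      have : (Hess xk - μ • 1 + μ • 1).IsHermitian := h1.add h2
      rwa [sub_add_cancel] at this
    have hlow : μ * (ue ⬝ᵥ ue) ≤ ue ⬝ᵥ (Hess xk *ᵥ ue) := by
      have := (hbound xk hxk).1.dotProduct_mulVec_nonneg ue
      simp only [sub_mulVec, smul_mulVec, one_mulVec, dotProduct_sub,
        dotProduct_smul, smul_eq_mul, RCLike.re_to_real, star_trivial] at this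
      linarith
    have hcomp1 : ue ⬝ᵥ (Hess xk *ᵥ ue) ≤ lamMax (Hk⁻¹ * Hess xk) * (ue ⬝ᵥ (Hk *ᵥ ue)) :=
      quad_le_lamMax_mul (Hess xk) Hk hHessH hHk ue
    have hqeq : ue ⬝ᵥ (Hk *ᵥ ue) = qForm Hk u := (qForm_eq_dot Hk u).symm
    have hq0 : 0 ≤ qForm Hk u := qF_nonneg u
    have hlam : lamMax (Hk⁻¹ * Hess xk) ≤ ηk := hηk ▸ le_max_left _ _
    have hnorm : ue ⬝ᵥ ue = ‖u‖ ^ 2 := by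
      have h1 : ⟪u, u⟫ = ue ⬝ᵥ ue := inner_eq_dot u u
      have h2 : ⟪u, u⟫ = ‖u‖ ^ 2 := real_inner_self_eq_norm_sq u
      linarith
    have hmain : μ * ‖u‖ ^ 2 ≤ ηk * qForm Hk u := by
      have h5 : lamMax (Hk⁻¹ * Hess xk) * (ue ⬝ᵥ (Hk *ᵥ ue)) ≤ ηk * (ue ⬝ᵥ (Hk *ᵥ ue)) :=
        mul_le_mul_of_nonneg_right hlam (by rw [hqeq]; exact hq0)
      calc μ * ‖u‖ ^ 2 = μ * (ue ⬝ᵥ ue) := by rw [hnorm]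
        _ ≤ ue ⬝ᵥ (Hess xk *ᵥ ue) := hlow
        _ ≤ lamMax (Hk⁻¹ * Hess xk) * (ue ⬝ᵥ (Hk *ᵥ ue)) := hcomp1
        _ ≤ ηk * (ue ⬝ᵥ (Hk *ᵥ ue)) := h5
        _ = ηk * qForm Hk u := by rw [hqeq]
    have hupos : 0 < ‖u‖ := norm_pos_iff.mpr hune
    have hηpos : 0 < ηk := by
      by_contra hle
      push_neg at hle
      have h1 : 0 < μ * ‖u‖ ^ 2 := by positivity
      have h2 : 0 ≤ (-ηk) * qForm Hk u := mul_nonneg (by linarith) hq0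
      nlinarith
    have hfin : ‖u‖ ^ 2 ≤ 2 * ηk / μ * ‖g‖ * ‖xt - xk‖ := by
      have hq2 : qForm Hk u ≤ 2 * (‖g‖ * ‖xt - xk‖) := by linarith
      have h6 : ηk * qForm Hk u ≤ ηk * (2 * (‖g‖ * ‖xt - xk‖)) :=
        mul_le_mul_of_nonneg_left hq2 (le_of_lt hηpos)
      have h8 : ηk * (2 * (‖g‖ * ‖xt - xk‖)) = 2 * ηk * ‖g‖ * ‖xt - xk‖ := by ring
      have h7 : μ * ‖u‖ ^ 2 ≤ 2 * ηk * ‖g‖ * ‖xt - xk‖ := by linarith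
      rw [div_mul_eq_mul_div, div_mul_eq_mul_div, le_div_iff₀ hμ]
      linarith
    have : ‖u‖ ≤ Real.sqrt (2 * ηk / μ * ‖g‖ * ‖xt - xk‖) := by
      rw [← Real.sqrt_sq (norm_nonneg u)]
      exact Real.sqrt_le_sqrt hfin
    calc ‖y - xt‖ = ‖u‖ := rfl
      _ ≤ Real.sqrt (2 * ηk / μ * ‖g‖ * ‖xt - xk‖) := this
      _ = Real.sqrt (2 * ηk / μ) * Real.sqrt ‖g‖ * Real.sqrt ‖xt - xk‖ := by
          rw [Real.sqrt_mul (by positivity), Real.sqrt_mul (by positivity)]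
end
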